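/- (Corollary 2) Let L be a finite-dimensional nilpotent left Leibniz algebra over a field k of characteristic 0. A subspace V ⊆ L generates L (i.e., the smallest subalgebra of L containing V is L) if and only if V + [L,L] = L. -/
import Mathlib


/-
Basic notions for (left) Leibniz algebras, given by a bilinear bracket
`β : M →ₗ[k] M →ₗ[k] M` on a `k`-vector space `M`.
-/

section LeibnizDefs

variable {k : Type*} [Field k] {M : Type*} [AddCommGroup M] [Module k M]

/-- `[A, B]`: the linear span of brackets of elements of two subspaces. -/
def bracketSpan (β : M →ₗ[k] M →ₗ[k] M) (A B : Submodule k M) : Submodule k M :=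
  Submodule.span k {z : M | ∃ a ∈ A, ∃ b ∈ B, z = β a b}

/-- Derived series of a subspace `I`: `D^0 = I`, `D^{n+1} = [D^n, D^n]`. -/
def derivedSeriesOf (β : M →ₗ[k] M →ₗ[k] M) (I : Submodule k M) : ℕ → Submodule k M
  | 0 => I
  | n + 1 => bracketSpan β (derivedSeriesOf β I n) (derivedSeriesOf β I n)

/-- Lower central series of a subspace `I`: `C^0 = I`, `C^{n+1} = [I, C^n]`. -/
def lowerCentralSeriesOf (β : M →ₗ[k] M →ₗ[k] M) (I : Submodule k M) : ℕ → Submodule k M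
  | 0 => I
  | n + 1 => bracketSpan β I (lowerCentralSeriesOf β I n)

/-- A two-sided ideal. -/
def LeibnizIdeal (β : M →ₗ[k] M →ₗ[k] M) (I : Submodule k M) : Prop :=
  (∀ x : M, ∀ u ∈ I, β x u ∈ I) ∧ (∀ u ∈ I, ∀ x : M, β u x ∈ I)

/-- A subspace is solvable if its derived series reaches `0`. -/
def LeibnizSolvable (β : M →ₗ[k] M →ₗ[k] M) (I : Submodule k M) : Prop :=
  ∃ n, derivedSeriesOf β I n = ⊥

/-- A subspace is nilpotent if its lower central series reaches `0`. -/
def LeibnizNilpotent (β : M →ₗ[k] M →ₗ[k] M) (I : Submodule k M) : Prop :=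
  ∃ n, lowerCentralSeriesOf β I n = ⊥

/-- A subalgebra: a subspace closed under the bracket. -/
def LeibnizSubalgebra (β : M →ₗ[k] M →ₗ[k] M) (S : Submodule k M) : Prop :=
  ∀ u ∈ S, ∀ v ∈ S, β u v ∈ S

end LeibnizDefs

section Aux

variable {k : Type*} [Field k] {M : Type*} [AddCommGroup M] [Module k M]

lemma mem_bracketSpan' (β : M →ₗ[k] M →ₗ[k] M) {A B : Submodule k M} {a b : M}
    (ha : a ∈ A) (hb : b ∈ B) : β a b ∈ bracketSpan β A B :=
  Submodule.subset_span ⟨a, ha, b, hb, rfl⟩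

lemma bracketSpan_le' (β : M →ₗ[k] M →ₗ[k] M) {A B T : Submodule k M}
    (h : ∀ a ∈ A, ∀ b ∈ B, β a b ∈ T) : bracketSpan β A B ≤ T := by
  rw [bracketSpan, Submodule.span_le]
  rintro z ⟨a, ha, b, hb, rfl⟩
  exact h a ha b hb

lemma bracketSpan_mono' (β : M →ₗ[k] M →ₗ[k] M) {A B A' B' : Submodule k M}
    (hA : A ≤ A') (hB : B ≤ B') : bracketSpan β A B ≤ bracketSpan β A' B' :=
  bracketSpan_le' β fun a ha b hb => mem_bracketSpan' β (hA ha) (hB hb)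

lemma lcs_succ_le (β : M →ₗ[k] M →ₗ[k] M) :
    ∀ n, lowerCentralSeriesOf β (⊤ : Submodule k M) (n + 1) ≤
      lowerCentralSeriesOf β ⊤ n
  | 0 => le_top
  | n + 1 => bracketSpan_mono' β le_rfl (lcs_succ_le β n)

lemma lcs_add_le (β : M →ₗ[k] M →ₗ[k] M) (n : ℕ) :
    ∀ m, lowerCentralSeriesOf β (⊤ : Submodule k M) (n + m) ≤
      lowerCentralSeriesOf β ⊤ n
  | 0 => le_rfl
  | m + 1 => le_trans (lcs_succ_le β (n + m)) (lcs_add_le β n m)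

/-- Key fact: `[Cₘ, Cₙ] ≤ C_{m+n+1}` in a left Leibniz algebra. -/
lemma bracket_lcs_le (β : M →ₗ[k] M →ₗ[k] M)
    (leib : ∀ x y z : M, β x (β y z) = β (β x y) z + β y (β x z)) :
    ∀ m n, bracketSpan β (lowerCentralSeriesOf β (⊤ : Submodule k M) m)
      (lowerCentralSeriesOf β ⊤ n) ≤ lowerCentralSeriesOf β ⊤ (m + n + 1) := by
  intro m
  induction m with
  | zero =>
    intro n
    simpa [lowerCentralSeriesOf] using le_rfl
  | succ m ih =>
    intro n
    apply bracketSpan_le'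
    intro a ha b hb
    have key : lowerCentralSeriesOf β (⊤ : Submodule k M) (m + 1) ≤
        Submodule.comap (β.flip b) (lowerCentralSeriesOf β ⊤ (m + 1 + n + 1)) := by
      show bracketSpan β ⊤ (lowerCentralSeriesOf β ⊤ m) ≤ _
      rw [bracketSpan, Submodule.span_le]
      rintro z ⟨x, -, u, hu, rfl⟩
      have h1 : β (β x u) b = β x (β u b) - β u (β x b) := by
        rw [eq_sub_iff_add_eq]; exact (leib x u b).symm
      simp only [SetLike.mem_coe, Submodule.mem_comap, LinearMap.flip_apply]
      rw [h1]
      apply sub_mem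
      · -- β x (β u b) ∈ C_{m+n+2} = [⊤, C_{m+n+1}]
        have hub : β u b ∈ lowerCentralSeriesOf β (⊤ : Submodule k M) (m + n + 1) :=
          ih n (mem_bracketSpan' β hu hb)
        have : β x (β u b) ∈ lowerCentralSeriesOf β (⊤ : Submodule k M) (m + n + 1 + 1) :=
          mem_bracketSpan' β trivial hub
        have heq : m + 1 + n + 1 = m + n + 1 + 1 := by ring
        rwa [heq]
      · -- β u (β x b) ∈ [Cₘ, C_{n+1}] ≤ C_{m+n+2}
        have hxb : β x b ∈ lowerCentralSeriesOf β (⊤ : Submodule k M) (n + 1) :=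
          mem_bracketSpan' β trivial hb
        have : β u (β x b) ∈ lowerCentralSeriesOf β (⊤ : Submodule k M) (m + (n + 1) + 1) :=
          ih (n + 1) (mem_bracketSpan' β hu hxb)
        have heq : m + 1 + n + 1 = m + (n + 1) + 1 := by ring
        rwa [heq]
    exact key ha

end Aux

/-- A subspace `V` generates a nilpotent Leibniz algebra `L` iff `V + [L,L] = L`. -/
theorem stmt_9 {k : Type*} [Field k] [CharZero k] {L : Type*} [AddCommGroup L] [Module k L]
    [FiniteDimensional k L] (β : L →ₗ[k] L →ₗ[k] L)
    (leib : ∀ x y z : L, β x (β y z) = β (β x y) z + β y (β x z))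
    (hnil : LeibnizNilpotent β (⊤ : Submodule k L)) (V : Submodule k L) :
    (∀ S : Submodule k L, LeibnizSubalgebra β S → V ≤ S → S = ⊤) ↔
      V ⊔ bracketSpan β ⊤ ⊤ = ⊤ := by
  constructor
  · intro hgen
    apply hgen
    · intro u _ v _
      exact Submodule.mem_sup_right (mem_bracketSpan' β trivial trivial)
    · exact le_sup_left
  · intro hsup S hS hVS
    -- S ⊔ C₁ = ⊤
    have hS1 : S ⊔ lowerCentralSeriesOf β (⊤ : Submodule k L) 1 = ⊤ := by
      have h0 : lowerCentralSeriesOf β (⊤ : Submodule k L) 1 = bracketSpan β ⊤ ⊤ := rfl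
      apply top_le_iff.mp
      conv_lhs => rw [← hsup]
      exact sup_le_sup hVS h0.ge
    -- By induction, S ⊔ Cₙ = ⊤ for all n
    have key : ∀ n, S ⊔ lowerCentralSeriesOf β (⊤ : Submodule k L) n = ⊤ := by
      intro n
      induction n with
      | zero => exact sup_top_eq S
      | succ n ih =>
        -- C₁ = [⊤,⊤] = [S ⊔ Cₙ, S ⊔ Cₙ] ≤ S ⊔ C_{n+1}
        have hC1 : lowerCentralSeriesOf β (⊤ : Submodule k L) 1 ≤
            S ⊔ lowerCentralSeriesOf β ⊤ (n + 1) := by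
          show bracketSpan β ⊤ (lowerCentralSeriesOf β ⊤ 0) ≤ _
          apply bracketSpan_le'
          intro a _ b _
          have ha : a ∈ S ⊔ lowerCentralSeriesOf β (⊤ : Submodule k L) n := by
            rw [ih]; trivial
          have hb : b ∈ S ⊔ lowerCentralSeriesOf β (⊤ : Submodule k L) n := by
            rw [ih]; trivial
          obtain ⟨s, hs, u, hu, rfl⟩ := Submodule.mem_sup.mp ha
          obtain ⟨t, ht, v, hv, rfl⟩ := Submodule.mem_sup.mp hb
          have expand : β (s + u) (t + v) = β s t + (β s v + (β u t + β u v)) := by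
            simp [map_add]; abel
          rw [expand]
          refine add_mem (Submodule.mem_sup_left (hS s hs t ht)) (add_mem ?_ (add_mem ?_ ?_))
          · exact Submodule.mem_sup_right (mem_bracketSpan' β trivial hv)
          · apply Submodule.mem_sup_right
            have : β u t ∈ lowerCentralSeriesOf β (⊤ : Submodule k L) (n + 0 + 1) :=
              bracket_lcs_le β leib n 0 (mem_bracketSpan' β hu trivial)
            simpa using this
          · apply Submodule.mem_sup_right
            have h1 : β u v ∈ lowerCentralSeriesOf β (⊤ : Submodule k L) (n + n + 1) :=
              bracket_lcs_le β leib n n (mem_bracketSpan' β hu hv)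
            have h2 : lowerCentralSeriesOf β (⊤ : Submodule k L) (n + n + 1) ≤
                lowerCentralSeriesOf β ⊤ (n + 1) := by
              have heq : n + n + 1 = (n + 1) + n := by ring
              rw [heq]
              exact lcs_add_le β (n + 1) n
            exact h2 h1
        apply top_le_iff.mp
        calc (⊤ : Submodule k L) = S ⊔ lowerCentralSeriesOf β ⊤ 1 := hS1.symm
          _ ≤ S ⊔ (S ⊔ lowerCentralSeriesOf β ⊤ (n + 1)) := sup_le_sup le_rfl hC1
          _ = S ⊔ lowerCentralSeriesOf β ⊤ (n + 1) := by rw [← sup_assoc, sup_idem]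
    obtain ⟨n, hn⟩ := hnil
    have := key n
    rwa [hn, sup_bot_eq] at this
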